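/- Let $\sigma > 0$, $\tau = 1/\sigma^2$, and let $x_S, x_T$ be disjoint finite multisets of reals of sizes $n_s, n_t \geq 1$ such that $F(\tau; x_S, x_T) := \frac{n_s^2 \bar{x}_S^2}{n_s+\tau} + \frac{n_t^2 \bar{x}_T^2}{n_t+\tau} - \frac{(n_s+n_t)^2 \bar{x}_{S\cup T}^2}{n_s+n_t+\tau} \geq 0$. Then, with $m(\cdot)$ the Gaussian-prior marginal likelihood, $\frac{m(x_S) m(x_T)}{m(x_S \cup x_T)} \geq \sqrt{\frac{1}{2} \cdot \frac{\tau}{1+\tau} \cdot \frac{n_s + n_t}{n_s n_t}}$. -/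

import Mathlib

open Real MeasureTheory

/-- Marginal likelihood of the observations `x` under unit-variance Gaussian likelihood
with a Gaussian prior of mean `0` and precision `τ` on the common mean `θ`. -/
noncomputable def gaussMarginalPrec (τ : ℝ) {m : ℕ} (x : Fin m → ℝ) : ℝ :=
  ∫ θ : ℝ, (∏ i, 1 / Real.sqrt (2 * Real.pi) * Real.exp (-(x i - θ) ^ 2 / 2)) *
    (Real.sqrt τ / Real.sqrt (2 * Real.pi) * Real.exp (-τ * θ ^ 2 / 2))


lemma gauss_eq (τ : ℝ) (hτ : 0 < τ) {m : ℕ} (x : Fin m → ℝ) :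
    gaussMarginalPrec τ x = (1 / Real.sqrt (2 * π)) ^ m * (Real.sqrt τ / Real.sqrt (2 * π)) *
      Real.exp (-(∑ i, (x i) ^ 2 - (∑ i, x i) ^ 2 / (m + τ)) / 2) *
      Real.sqrt (2 * π / (m + τ)) := by
  have ha : (0:ℝ) < (m:ℝ) + τ := by positivity
  set S := ∑ i, x i with hSdef
  set Q := ∑ i, (x i) ^ 2 with hQdef
  set a := (m:ℝ) + τ with hadef
  have ha' : a ≠ 0 := ha.ne'
  have hm : (m:ℝ) = a - τ := by rw [hadef]; ring
  set C := (1 / Real.sqrt (2 * π)) ^ m * (Real.sqrt τ / Real.sqrt (2 * π)) *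
      Real.exp (-(Q - S ^ 2 / a) / 2) with hCdef
  have key : ∀ θ : ℝ, (∏ i, 1 / Real.sqrt (2 * π) * Real.exp (-(x i - θ) ^ 2 / 2)) *
      (Real.sqrt τ / Real.sqrt (2 * π) * Real.exp (-τ * θ ^ 2 / 2)) =
      C * Real.exp (-(a / 2) * (θ - S / a) ^ 2) := by
    intro θ
    rw [Finset.prod_mul_distrib, Finset.prod_const, Finset.card_univ, Fintype.card_fin,
      ← Real.exp_sum]
    have hsum : ∑ i, (-(x i - θ) ^ 2 / 2) = -(Q - 2 * S * θ + (m:ℝ) * θ ^ 2) / 2 := by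
      have h1 : ∀ i : Fin m, -(x i - θ) ^ 2 / 2 = -(x i)^2/2 + x i * θ - θ^2/2 := by
        intro i; ring
      simp only [h1, Finset.sum_add_distrib, Finset.sum_sub_distrib, ← Finset.sum_div,
        ← Finset.sum_mul, Finset.sum_neg_distrib, Finset.sum_const, Finset.card_univ,
        Fintype.card_fin, nsmul_eq_mul, ← hQdef, ← hSdef]
      ring
    have hexp : Real.exp (-(Q - 2 * S * θ + (m:ℝ) * θ ^ 2) / 2) * Real.exp (-τ * θ ^ 2 / 2) =
        Real.exp (-(Q - S ^ 2 / a) / 2) * Real.exp (-(a / 2) * (θ - S / a) ^ 2) := by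
      rw [← Real.exp_add, ← Real.exp_add]
      congr 1
      rw [hm]
      field_simp
      ring
    rw [hsum]
    calc (1 / Real.sqrt (2 * π)) ^ m * Real.exp (-(Q - 2 * S * θ + (m:ℝ) * θ ^ 2) / 2) *
        (Real.sqrt τ / Real.sqrt (2 * π) * Real.exp (-τ * θ ^ 2 / 2))
        = (1 / Real.sqrt (2 * π)) ^ m * (Real.sqrt τ / Real.sqrt (2 * π)) *
          (Real.exp (-(Q - 2 * S * θ + (m:ℝ) * θ ^ 2) / 2) * Real.exp (-τ * θ ^ 2 / 2)) := by
          ring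
      _ = (1 / Real.sqrt (2 * π)) ^ m * (Real.sqrt τ / Real.sqrt (2 * π)) *
          (Real.exp (-(Q - S ^ 2 / a) / 2) * Real.exp (-(a / 2) * (θ - S / a) ^ 2)) := by
          rw [hexp]
      _ = C * Real.exp (-(a / 2) * (θ - S / a) ^ 2) := by rw [hCdef]; ring
  unfold gaussMarginalPrec
  rw [show (fun θ : ℝ => (∏ i, 1 / Real.sqrt (2 * Real.pi) * Real.exp (-(x i - θ) ^ 2 / 2)) *
    (Real.sqrt τ / Real.sqrt (2 * Real.pi) * Real.exp (-τ * θ ^ 2 / 2))) =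
    (fun θ : ℝ => C * Real.exp (-(a / 2) * (θ - S / a) ^ 2)) from funext key]
  rw [MeasureTheory.integral_const_mul]
  rw [integral_sub_right_eq_self (fun θ => Real.exp (-(a/2) * θ ^ 2)) (S/a)]
  rw [integral_gaussian]
  rw [show π / (a / 2) = 2 * π / a by rw [div_div_eq_mul_div, mul_comm]]

lemma sum_append_eq {m n : ℕ} (u : Fin m → ℝ) (v : Fin n → ℝ) (g : ℝ → ℝ) :
    ∑ i : Fin (m+n), g (Fin.append u v i) = ∑ i, g (u i) + ∑ i, g (v i) := by
  rw [Fin.sum_univ_add]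
  congr 1
  · exact Finset.sum_congr rfl fun i _ => by rw [Fin.append_left]
  · exact Finset.sum_congr rfl fun i _ => by rw [Fin.append_right]

lemma key_ineq (τ N T : ℝ) (hτ0 : 0 < τ) (hN : 1 ≤ N) (hT : 1 ≤ T) :
    τ * (N + T) * ((N + τ) * (T + τ)) ≤ τ * (N + T + τ) * (2 * (1 + τ) * (N * T)) := by
  have hN0 : 0 < N := by linarith
  have hT0 : 0 < T := by linarith
  have h2 : N + T ≤ 2 * (N * T) := by nlinarith [mul_nonneg (sub_nonneg.2 hN) (sub_nonneg.2 hT)]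
  have hA := mul_le_mul_of_nonneg_left h2 (by positivity : (0:ℝ) ≤ τ * τ * (N + T))
  have hB := mul_le_mul_of_nonneg_left h2 (by positivity : (0:ℝ) ≤ τ * τ * τ)
  have hC : (0:ℝ) ≤ τ * (N * T) * (N + T) := by positivity
  have hD : (0:ℝ) ≤ τ * τ * (N * T) := by positivity
  nlinarith [hA, hB, hC, hD]

set_option maxHeartbeats 1000000 in
theorem stmt_15 (σ : ℝ) (hσ : 0 < σ) (τ : ℝ) (hτ : τ = 1 / σ ^ 2)
    (ns nt : ℕ) (hns : 1 ≤ ns) (hnt : 1 ≤ nt)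
    (xS : Fin ns → ℝ) (xT : Fin nt → ℝ) (xbarS xbarT xbarU : ℝ)
    (hS : xbarS = (∑ i, xS i) / ns) (hT : xbarT = (∑ i, xT i) / nt)
    (hU : xbarU = (ns * xbarS + nt * xbarT) / (ns + nt))
    (hF : 0 ≤ (ns : ℝ) ^ 2 * xbarS ^ 2 / (ns + τ) + (nt : ℝ) ^ 2 * xbarT ^ 2 / (nt + τ) -
      ((ns : ℝ) + nt) ^ 2 * xbarU ^ 2 / ((ns : ℝ) + nt + τ)) :
    Real.sqrt (1 / 2 * (τ / (1 + τ)) * (((ns : ℝ) + nt) / (ns * nt))) ≤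
      gaussMarginalPrec τ xS * gaussMarginalPrec τ xT /
        gaussMarginalPrec τ (Fin.append xS xT) := by
  have hτ0 : 0 < τ := by rw [hτ]; positivity
  have hns1 : (1:ℝ) ≤ ns := by exact_mod_cast hns
  have hnt1 : (1:ℝ) ≤ nt := by exact_mod_cast hnt
  have hns0 : (0:ℝ) < ns := by linarith
  have hnt0 : (0:ℝ) < nt := by linarith
  set S1 := ∑ i, xS i with hS1
  set S2 := ∑ i, xT i with hS2
  set Q1 := ∑ i, (xS i)^2 with hQ1
  set Q2 := ∑ i, (xT i)^2 with hQ2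
  set aS := (ns:ℝ) + τ with haS
  set aT := (nt:ℝ) + τ with haT
  set aU := (ns:ℝ) + nt + τ with haU
  have haS0 : 0 < aS := by positivity
  have haT0 : 0 < aT := by positivity
  have haU0 : 0 < aU := by positivity
  -- means
  have heS : (ns:ℝ) * xbarS = S1 := by rw [hS]; field_simp
  have heT : (nt:ℝ) * xbarT = S2 := by rw [hT]; field_simp
  have heU : ((ns:ℝ) + nt) * xbarU = S1 + S2 := by
    rw [hU, heS, heT]; field_simp
  set FF := (S1^2/aS + S2^2/aT - (S1+S2)^2/aU) / 2 with hFFdef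
  have hFF : 0 ≤ FF := by
    have e1 : (ns:ℝ)^2 * xbarS^2 = S1^2 := by rw [← heS]; ring
    have e2 : (nt:ℝ)^2 * xbarT^2 = S2^2 := by rw [← heT]; ring
    have e3 : ((ns:ℝ)+nt)^2 * xbarU^2 = (S1+S2)^2 := by rw [← heU]; ring
    rw [hFFdef]
    rw [e1, e2, e3] at hF
    linarith
  -- closed forms
  set u := Real.sqrt (2*π) with hu
  set v := Real.sqrt τ with hv
  set sS := Real.sqrt aS with hsS
  set sT := Real.sqrt aT with hsT
  set sU := Real.sqrt aU with hsU
  have hu0 : 0 < u := Real.sqrt_pos.mpr (by positivity)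
  have hv0 : 0 < v := Real.sqrt_pos.mpr hτ0
  have hsS0 : 0 < sS := Real.sqrt_pos.mpr haS0
  have hsT0 : 0 < sT := Real.sqrt_pos.mpr haT0
  have hsU0 : 0 < sU := Real.sqrt_pos.mpr haU0
  set E1 := Real.exp (-(Q1 - S1^2/aS)/2) with hE1
  set E2 := Real.exp (-(Q2 - S2^2/aT)/2) with hE2
  set E3 := Real.exp (-(Q1 + Q2 - (S1+S2)^2/aU)/2) with hE3
  have hmS : gaussMarginalPrec τ xS = (1/u)^ns * (v/u) * E1 * (u/sS) := by
    rw [gauss_eq τ hτ0 xS, ← hS1, ← hQ1, ← haS, Real.sqrt_div (by positivity : (0:ℝ) ≤ 2*π)]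
  have hmT : gaussMarginalPrec τ xT = (1/u)^nt * (v/u) * E2 * (u/sT) := by
    rw [gauss_eq τ hτ0 xT, ← hS2, ← hQ2, ← haT, Real.sqrt_div (by positivity : (0:ℝ) ≤ 2*π)]
  have hmU : gaussMarginalPrec τ (Fin.append xS xT) =
      (1/u)^(ns+nt) * (v/u) * E3 * (u/sU) := by
    rw [gauss_eq τ hτ0 (Fin.append xS xT)]
    rw [show ∑ i : Fin (ns+nt), Fin.append xS xT i = S1 + S2 from
      sum_append_eq xS xT id]
    rw [show ∑ i : Fin (ns+nt), (Fin.append xS xT i)^2 = Q1 + Q2 from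
      sum_append_eq xS xT (fun t => t^2)]
    rw [show ((ns+nt : ℕ) : ℝ) + τ = aU by push_cast [haU]; ring]
    rw [Real.sqrt_div (by positivity : (0:ℝ) ≤ 2*π)]
  have hE : E1 * E2 = E3 * Real.exp FF := by
    rw [hE1, hE2, hE3, ← Real.exp_add, ← Real.exp_add, hFFdef]
    congr 1
    ring
  set r := gaussMarginalPrec τ xS * gaussMarginalPrec τ xT /
      gaussMarginalPrec τ (Fin.append xS xT) with hr
  have hrval : r = v * sU / (sS * sT) * Real.exp FF := by
    rw [hr, hmS, hmT, hmU, pow_add]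
    have hE30 : E3 ≠ 0 := Real.exp_ne_zero _
    rw [show ((1/u)^ns * (v/u) * E1 * (u/sS)) * ((1/u)^nt * (v/u) * E2 * (u/sT)) /
        ((1/u)^ns * (1/u)^nt * (v/u) * E3 * (u/sU)) =
        v * sU / (sS * sT) * (E1 * E2 / E3) by
      field_simp]
    rw [hE]
    field_simp
  -- final comparison
  have hkey : 1/2 * (τ/(1+τ)) * (((ns:ℝ)+nt)/(ns*nt)) ≤ τ * (aU / (aS * aT)) := by
    have h1τ : (1:ℝ) + τ ≠ 0 := by positivity
    have hnsne : (ns:ℝ) ≠ 0 := hns0.ne'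
    have hntne : (nt:ℝ) ≠ 0 := hnt0.ne'
    rw [show 1/2 * (τ/(1+τ)) * (((ns:ℝ)+nt)/(ns*nt)) =
        (τ * ((ns:ℝ)+nt)) / (2*(1+τ)*(ns*nt)) by field_simp,
      show τ * (aU / (aS * aT)) = (τ * aU) / (aS * aT) by ring,
      div_le_div_iff₀ (by positivity) (by positivity : (0:ℝ) < aS * aT), haS, haT, haU]
    exact key_ineq τ ns nt hτ0 hns1 hnt1
  calc Real.sqrt (1/2 * (τ/(1+τ)) * (((ns:ℝ)+nt)/(ns*nt)))
      ≤ Real.sqrt (τ * (aU / (aS * aT))) := Real.sqrt_le_sqrt hkey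
    _ = v * sU / (sS * sT) := by
        rw [Real.sqrt_mul hτ0.le, Real.sqrt_div haU0.le, Real.sqrt_mul haS0.le,
          ← hv, ← hsU, ← hsS, ← hsT, mul_div_assoc]
    _ ≤ v * sU / (sS * sT) * Real.exp FF :=
        le_mul_of_one_le_right
          (le_of_lt (div_pos (mul_pos hv0 hsU0) (mul_pos hsS0 hsT0)))
          (Real.one_le_exp hFF)
    _ = r := hrval.symm
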